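/- Let a be even, b odd, with gcd(a,b) = 1, and define Q(a;b) := 6·(s(a;2b) + s(2a;b) − 2·s(a;b)). If a² ≡ −1 (mod b), then Q(a;b) = 0. -/

import Mathlib

open Finset Real

/-- The classical Dedekind sum `s(a;b)` defined by the cotangent sum. -/
noncomputable def dedekindS (a : ℤ) (b : ℕ) : ℝ :=
  (1 / (4 * (b : ℝ))) * ∑ ν ∈ Finset.Ico 1 b,
    Real.cot (Real.pi * a * ν / b) * Real.cot (Real.pi * ν / b)

/-- The rational part `Q(a;b)` of the elliptic classical Dedekind sum. -/
noncomputable def Qpart (a b : ℕ) : ℝ :=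
  6 * (dedekindS a (2 * b) + dedekindS (2 * a) b - 2 * dedekindS a b)

namespace QA

lemma cot_addi (x : ℝ) (n : ℤ) : Real.cot (x + n * π) = Real.cot x := by
  rw [Real.cot_eq_cos_div_sin, Real.cot_eq_cos_div_sin, Real.cos_add_int_mul_pi,
    Real.sin_add_int_mul_pi, mul_div_mul_left]
  exact zpow_ne_zero n (by norm_num)

lemma cot_zero' : Real.cot 0 = 0 := by
  rw [Real.cot_eq_cos_div_sin]; simp

lemma cot_neg' (x : ℝ) : Real.cot (-x) = -Real.cot x := by
  rw [Real.cot_eq_cos_div_sin, Real.cot_eq_cos_div_sin, Real.cos_neg, Real.sin_neg, div_neg]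

lemma cot_add_pi_div_two (x : ℝ) : Real.cot (x + π / 2) = -Real.tan x := by
  rw [Real.cot_eq_cos_div_sin, Real.tan_eq_sin_div_cos, Real.cos_add, Real.sin_add]
  simp [neg_div]

noncomputable def C (b : ℕ) (x : ZMod b) : ℝ := Real.cot (π * x.val / b)
noncomputable def T (b : ℕ) (x : ZMod b) : ℝ := Real.tan (π * x.val / b)

lemma arg_decomp (b : ℕ) [NeZero b] (m : ℤ) :
    π * (m : ℝ) / b = π * (((m : ZMod b)).val : ℝ) / b + (m / b : ℤ) * π := by
  have hb0 : (b : ℝ) ≠ 0 := Nat.cast_ne_zero.mpr (NeZero.ne b)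
  set v := ((m : ZMod b)).val with hv
  have h1 : (v : ℤ) + b * (m / b) = m := by
    rw [hv, ZMod.val_intCast]; exact Int.emod_add_mul_ediv m b
  have h2 : (v : ℝ) + (b : ℝ) * ((m / b : ℤ) : ℝ) = m := by exact_mod_cast h1
  field_simp
  linear_combination (-1 : ℝ) * h2

lemma C_int (b : ℕ) [NeZero b] (m : ℤ) : C b (m : ZMod b) = Real.cot (π * m / b) := by
  rw [C, arg_decomp b m, cot_addi]

lemma T_int (b : ℕ) [NeZero b] (m : ℤ) : T b (m : ZMod b) = Real.tan (π * m / b) := by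
  rw [T, arg_decomp b m, Real.tan_periodic.int_mul _ _]

lemma C_nat (b : ℕ) [NeZero b] (m : ℕ) : C b (m : ZMod b) = Real.cot (π * m / b) := by
  exact_mod_cast C_int b (m : ℤ)

lemma C_zero (b : ℕ) [NeZero b] : C b 0 = 0 := by
  rw [C, ZMod.val_zero]
  simpa using cot_zero'

lemma C_neg (b : ℕ) [NeZero b] (x : ZMod b) : C b (-x) = -C b x := by
  have hx : ((x.val : ℤ) : ZMod b) = x := by
    rw [Int.cast_natCast]; exact ZMod.natCast_rightInverse x
  have h1 : C b (-x) = Real.cot (π * ((-(x.val : ℤ) : ℤ)) / b) := by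
    rw [← C_int]; congr 1; rw [Int.cast_neg, hx]
  rw [h1, show (π * ((-(x.val : ℤ) : ℤ) : ℝ) / b) = -(π * (x.val : ℝ) / b) by push_cast; ring,
    cot_neg', C]

lemma sum_conv_range (b : ℕ) [NeZero b] (f : ZMod b → ℝ) :
    ∑ ν ∈ Finset.range b, f (ν : ZMod b) = ∑ x : ZMod b, f x := by
  refine Finset.sum_nbij' (i := fun ν => ((ν : ℕ) : ZMod b)) (j := fun x => x.val) ?_ ?_ ?_ ?_ ?_
  · intro ν _; exact Finset.mem_univ _
  · intro x _; exact Finset.mem_range.mpr (ZMod.val_lt x)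
  · intro ν hν; exact ZMod.val_cast_of_lt (Finset.mem_range.mp hν)
  · intro x _; exact ZMod.natCast_rightInverse x
  · intro ν _; rfl

lemma sum_conv (b : ℕ) [NeZero b] (hb : 0 < b) (f : ZMod b → ℝ) (hf0 : f 0 = 0) :
    ∑ ν ∈ Finset.Ico 1 b, f (ν : ZMod b) = ∑ x : ZMod b, f x := by
  rw [← sum_conv_range b f, Finset.range_eq_Ico, Finset.sum_eq_sum_Ico_succ_bot hb]
  simp [hf0]

lemma sum_mul_unit (b : ℕ) [NeZero b] (f : ZMod b → ℝ) (u : (ZMod b)ˣ) :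
    ∑ x : ZMod b, f ((u : ZMod b) * x) = ∑ x : ZMod b, f x :=
  Equiv.sum_comp (Units.mulLeft u) f

lemma sum_add_const (b : ℕ) [NeZero b] (f : ZMod b → ℝ) (c : ZMod b) :
    ∑ x : ZMod b, f (x + c) = ∑ x : ZMod b, f x :=
  Equiv.sum_comp (Equiv.addRight c) f

lemma sum_range_double (n : ℕ) (f : ℕ → ℝ) :
    ∑ ν ∈ Finset.range (2 * n), f ν
      = ∑ μ ∈ Finset.range n, f (2 * μ) + ∑ μ ∈ Finset.range n, f (2 * μ + 1) := by
  induction n with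
  | zero => simp
  | succ n ih =>
      rw [show 2 * (n + 1) = 2 * n + 1 + 1 by ring, Finset.sum_range_succ, Finset.sum_range_succ,
        ih, Finset.sum_range_succ, Finset.sum_range_succ]
      ring_nf

lemma tan_id (b : ℕ) [NeZero b] (hbodd : Odd b) (x : ZMod b) :
    T b x = C b x - 2 * C b (2 * x) := by
  have hb0 : (b : ℝ) ≠ 0 := Nat.cast_ne_zero.mpr (NeZero.ne b)
  by_cases hx : x = 0
  · subst hx
    rw [show (2 : ZMod b) * 0 = 0 by ring, C_zero, T, ZMod.val_zero]
    simp
  · set v := x.val with hvdef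
    have hv0 : 0 < v := Nat.pos_of_ne_zero (fun h => hx ((ZMod.val_eq_zero x).mp h))
    have hvb : v < b := ZMod.val_lt x
    set θ : ℝ := π * v / b with hθ
    have hθ0 : 0 < θ := by
      apply div_pos (by positivity) (by exact_mod_cast Nat.pos_of_ne_zero (NeZero.ne b))
    have hθπ : θ < π := by
      rw [hθ, div_lt_iff₀ (by exact_mod_cast Nat.pos_of_ne_zero (NeZero.ne b))]
      have : (x.val : ℝ) < b := by exact_mod_cast hvb
      nlinarith [Real.pi_pos]
    have hsin : Real.sin θ ≠ 0 := (Real.sin_pos_of_pos_of_lt_pi hθ0 hθπ).ne'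
    have hcos : Real.cos θ ≠ 0 := by
      intro hc
      obtain ⟨k, hk⟩ := Real.cos_eq_zero_iff.mp hc
      rw [hθ] at hk
      field_simp at hk
      have h2v : (2 * (v : ℝ)) = (2 * k + 1) * b := by
        apply mul_left_cancel₀ Real.pi_ne_zero
        linear_combination π * hk
      have h2vZ : (2 * v : ℤ) = (2 * k + 1) * b := by exact_mod_cast h2v
      have heven : Even (2 * (v : ℤ)) := ⟨v, by ring⟩
      rw [h2vZ] at heven
      rcases hbodd with ⟨t, ht⟩
      have hodd : Odd ((2 * k + 1) * (b : ℤ)) := by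
        refine Odd.mul ⟨k, by ring⟩ ⟨t, by exact_mod_cast congrArg (Nat.cast : ℕ → ℤ) ht⟩
      exact (Int.not_odd_iff_even.mpr heven) hodd
    have hC2 : C b (2 * x) = Real.cot (2 * θ) := by
      have : ((2 * v : ℕ) : ZMod b) = 2 * x := by
        push_cast [hvdef, ZMod.natCast_zmod_val]; ring
      rw [← this, C_nat]
      congr 1
      push_cast
      rw [hθ]; ring
    rw [T, C, ← hvdef, ← hθ, hC2, Real.tan_eq_sin_div_cos, Real.cot_eq_cos_div_sin,
      Real.cot_eq_cos_div_sin, Real.sin_two_mul, Real.cos_two_mul]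
    have hs2 : Real.sin θ * Real.cos θ ≠ 0 := mul_ne_zero hsin hcos
    field_simp
    linear_combination (Real.sin_sq_add_cos_sq θ)

lemma odd_term (a b μ : ℕ) [NeZero b] (hbodd : Odd b) (haev : Even a) :
    Real.cot (π * ((a : ℤ) : ℝ) * ((2 * μ + 1 : ℕ) : ℝ) / ((2 * b : ℕ) : ℝ)) *
      Real.cot (π * ((2 * μ + 1 : ℕ) : ℝ) / ((2 * b : ℕ) : ℝ))
      = -(T b ((μ : ZMod b) + (((b + 1) / 2 : ℕ) : ZMod b))
          * C b ((a : ZMod b) * ((μ : ZMod b) + (((b + 1) / 2 : ℕ) : ZMod b)))) := by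
  have hb0 : (b : ℝ) ≠ 0 := Nat.cast_ne_zero.mpr (NeZero.ne b)
  set c' : ℕ := (b + 1) / 2 with hc'
  set k : ZMod b := (μ : ZMod b) + (c' : ZMod b) with hk
  set v : ℕ := k.val with hv
  have hcast : ((v : ℕ) : ZMod b) = k := ZMod.natCast_rightInverse k
  have h2c : (2 : ZMod b) * (c' : ZMod b) = 1 := by
    have h1 : 2 * c' = b + 1 := by
      obtain ⟨t, ht⟩ := hbodd; omega
    calc (2 : ZMod b) * (c' : ZMod b) = ((2 * c' : ℕ) : ZMod b) := by push_cast; ring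
      _ = ((b + 1 : ℕ) : ZMod b) := by rw [h1]
      _ = 1 := by push_cast [ZMod.natCast_self]; ring
  have hkk : 2 * ((v : ℕ) : ZMod b) = 2 * (μ : ZMod b) + 1 := by
    rw [hcast, hk, mul_add, h2c]
  have hdvd : (b : ℤ) ∣ ((2 * μ + 1 : ℤ) - 2 * v) := by
    apply (ZMod.intCast_zmod_eq_zero_iff_dvd _ _).mp
    push_cast
    linear_combination -hkk
  obtain ⟨j, hj⟩ := hdvd
  have hjodd : Odd j := by
    have h1 : Odd ((b : ℤ) * j) := by
      rw [← hj]; exact ⟨(μ : ℤ) - v, by ring⟩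
    exact (Int.odd_mul.mp h1).2
  obtain ⟨mJ, hmJ⟩ := hjodd
  obtain ⟨a₁, ha₁⟩ := haev
  have hreal : ((2 * μ + 1 : ℕ) : ℝ) = 2 * v + b * (2 * mJ + 1) := by
    have h1 : (2 * μ + 1 : ℤ) = 2 * v + b * j := by linarith [hj]
    rw [hmJ] at h1
    exact_mod_cast h1
  have f2 : Real.cot (π * ((2 * μ + 1 : ℕ) : ℝ) / ((2 * b : ℕ) : ℝ)) = -T b k := by
    have harg : π * ((2 * μ + 1 : ℕ) : ℝ) / ((2 * b : ℕ) : ℝ)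
        = (π * v / b + π / 2) + (mJ : ℤ) * π := by
      rw [hreal]; push_cast; field_simp; ring
    rw [harg, cot_addi, cot_add_pi_div_two]
    simp only [T, ← hv]
  have f1 : Real.cot (π * ((a : ℤ) : ℝ) * ((2 * μ + 1 : ℕ) : ℝ) / ((2 * b : ℕ) : ℝ))
      = C b ((a : ZMod b) * k) := by
    have hav : ((a * v : ℕ) : ZMod b) = (a : ZMod b) * k := by push_cast [hcast]; ring
    have harg : π * ((a : ℤ) : ℝ) * ((2 * μ + 1 : ℕ) : ℝ) / ((2 * b : ℕ) : ℝ)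
        = π * ((a * v : ℕ) : ℝ) / b + ((a₁ : ℤ) * (2 * mJ + 1) : ℤ) * π := by
      rw [hreal]; push_cast [ha₁]; field_simp; ring
    rw [harg, cot_addi, ← hav, C_nat]
  rw [f1, f2]; ring

end QA

open QA

theorem Qpart_zero (a b : ℕ) (ha : 0 < a) (hb : 0 < b) (haev : Even a) (hbodd : Odd b)
    (hcop : Nat.gcd a b = 1) (hsq : (b : ℤ) ∣ (a : ℤ) ^ 2 + 1) :
    Qpart a b = 0 := by
  haveI : NeZero b := ⟨hb.ne'⟩
  have hb0 : (b : ℝ) ≠ 0 := Nat.cast_ne_zero.mpr (NeZero.ne b)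
  set α : ZMod b := (a : ZMod b) with hα
  have hα2 : α * α = -1 := by
    have h0 : (((a : ℤ) ^ 2 + 1 : ℤ) : ZMod b) = 0 :=
      (ZMod.intCast_zmod_eq_zero_iff_dvd _ _).mpr hsq
    push_cast at h0
    linear_combination h0
  set u : (ZMod b)ˣ := ZMod.unitOfCoprime a hcop with hudef
  have hu : (u : ZMod b) = α := ZMod.coe_unitOfCoprime a hcop
  set S3 : ℝ := ∑ x : ZMod b, C b (α * x) * C b x with hS3def
  set T2 : ℝ := ∑ x : ZMod b, C b (2 * x) * C b (α * x) with hT2def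
  -- S3 = 0
  have hS3 : S3 = 0 := by
    have h1 : ∑ x : ZMod b, C b (α * ((u : ZMod b) * x)) * C b ((u : ZMod b) * x) = S3 :=
      QA.sum_mul_unit b (fun y => C b (α * y) * C b y) u
    rw [hu] at h1
    have h2 : ∀ x : ZMod b, C b (α * (α * x)) * C b (α * x) = -(C b (α * x) * C b x) := by
      intro x
      have hx : α * (α * x) = -x := by rw [← mul_assoc, hα2]; ring
      rw [hx, C_neg]
      ring
    rw [Finset.sum_congr rfl (fun x _ => h2 x), Finset.sum_neg_distrib] at h1
    have h3 : ∑ x : ZMod b, C b (α * x) * C b x = S3 := hS3def.symm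
    linarith [h1, h3]
  -- sum with 2α
  have hT2rel : ∑ x : ZMod b, C b ((2 * α) * x) * C b x = -T2 := by
    have h1 : ∑ x : ZMod b, C b ((2 * α) * ((u : ZMod b) * x)) * C b ((u : ZMod b) * x)
        = ∑ x : ZMod b, C b ((2 * α) * x) * C b x :=
      QA.sum_mul_unit b (fun y => C b ((2 * α) * y) * C b y) u
    rw [hu] at h1
    rw [← h1]
    have h2 : ∀ x : ZMod b, C b ((2 * α) * (α * x)) * C b (α * x)
        = -(C b (2 * x) * C b (α * x)) := by
      intro x
      have hx : (2 * α) * (α * x) = -(2 * x) := by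
        have : (2 * α) * (α * x) = 2 * (α * α) * x := by ring
        rw [this, hα2]; ring
      rw [hx, C_neg]; ring
    rw [Finset.sum_congr rfl (fun x _ => h2 x), Finset.sum_neg_distrib, ← hT2def]
  -- U
  have hU : ∑ x : ZMod b, T b x * C b (α * x) = -2 * T2 := by
    have h2 : ∀ x : ZMod b, T b x * C b (α * x)
        = C b x * C b (α * x) - 2 * (C b (2 * x) * C b (α * x)) := by
      intro x; rw [QA.tan_id b hbodd x]; ring
    rw [Finset.sum_congr rfl (fun x _ => h2 x), Finset.sum_sub_distrib, ← Finset.mul_sum]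
    have h3 : ∑ x : ZMod b, C b x * C b (α * x) = S3 := by
      rw [hS3def]
      exact Finset.sum_congr rfl fun x _ => mul_comm _ _
    rw [h3, hS3, ← hT2def]
    ring
  -- dedekindS a b = 0
  have hd3 : dedekindS a b = 0 := by
    rw [dedekindS]
    have key : ∑ ν ∈ Finset.Ico 1 b,
        Real.cot (π * ((a : ℤ) : ℝ) * ν / b) * Real.cot (π * ν / b) = S3 := by
      rw [hS3def, ← QA.sum_conv b hb (fun x => C b (α * x) * C b x) (by simp [C_zero])]
      refine Finset.sum_congr rfl fun ν hν => ?_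
      have e1 : C b (α * (ν : ZMod b)) = Real.cot (π * ((a * ν : ℕ) : ℝ) / b) := by
        rw [show α * (ν : ZMod b) = ((a * ν : ℕ) : ZMod b) by push_cast; ring, C_nat]
      rw [e1, QA.C_nat b ν]
      congr 2
      push_cast; ring
    rw [key, hS3, mul_zero]
  -- dedekindS (2a) b
  have hd2 : dedekindS (2 * (a : ℤ)) b = (1 / (4 * (b : ℝ))) * (-T2) := by
    rw [dedekindS]
    have key : ∑ ν ∈ Finset.Ico 1 b,
        Real.cot (π * ((2 * (a : ℤ) : ℤ) : ℝ) * ν / b) * Real.cot (π * ν / b)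
        = ∑ x : ZMod b, C b ((2 * α) * x) * C b x := by
      rw [← QA.sum_conv b hb (fun x => C b ((2 * α) * x) * C b x) (by simp [C_zero])]
      refine Finset.sum_congr rfl fun ν hν => ?_
      have e1 : C b ((2 * α) * (ν : ZMod b)) = Real.cot (π * ((2 * a * ν : ℕ) : ℝ) / b) := by
        rw [show (2 * α) * (ν : ZMod b) = ((2 * a * ν : ℕ) : ZMod b) by push_cast; ring, C_nat]
      rw [e1, QA.C_nat b ν]
      congr 2
      push_cast; ring
    rw [key, hT2rel]
  -- dedekindS a (2b)
  have hd1 : dedekindS a (2 * b) = (1 / (4 * ((2 * b : ℕ) : ℝ))) * (2 * T2) := by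
    rw [dedekindS]
    have h2b0 : (0 : ℕ) < 2 * b := by omega
    set g : ℕ → ℝ := fun ν => Real.cot (π * ((a : ℤ) : ℝ) * ν / ((2 * b : ℕ) : ℝ))
        * Real.cot (π * ν / ((2 * b : ℕ) : ℝ)) with hg
    have hg0 : g 0 = 0 := by
      simp [hg, QA.cot_zero']
    have hIco : ∑ ν ∈ Finset.Ico 0 (2 * b), g ν = g 0 + ∑ ν ∈ Finset.Ico 1 (2 * b), g ν :=
      Finset.sum_eq_sum_Ico_succ_bot h2b0 g
    have hrange : ∑ ν ∈ Finset.range (2 * b), g ν = ∑ ν ∈ Finset.Ico 0 (2 * b), g ν := by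
      rw [Finset.range_eq_Ico]
    have heven : ∑ μ ∈ Finset.range b, g (2 * μ) = 0 := by
      have h1 : ∀ μ : ℕ, g (2 * μ) = C b (α * (μ : ZMod b)) * C b (μ : ZMod b) := by
        intro μ
        have e1 : C b (α * (μ : ZMod b)) = Real.cot (π * ((a * μ : ℕ) : ℝ) / b) := by
          rw [show α * (μ : ZMod b) = ((a * μ : ℕ) : ZMod b) by push_cast; ring, QA.C_nat]
        have hx1 : π * ((a : ℤ) : ℝ) * ((2 * μ : ℕ) : ℝ) / ((2 * b : ℕ) : ℝ)
            = π * ((a * μ : ℕ) : ℝ) / (b : ℝ) := by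
          push_cast; field_simp
        have hx2 : π * ((2 * μ : ℕ) : ℝ) / ((2 * b : ℕ) : ℝ) = π * (μ : ℝ) / (b : ℝ) := by
          push_cast; field_simp
        simp only [hg]
        rw [hx1, hx2, e1, QA.C_nat b μ]
      rw [Finset.sum_congr rfl (fun μ _ => h1 μ),
        QA.sum_conv_range b (fun x => C b (α * x) * C b x), ← hS3def, hS3]
    have hodd : ∑ μ ∈ Finset.range b, g (2 * μ + 1) = 2 * T2 := by
      have h1 : ∀ μ : ℕ, g (2 * μ + 1)
          = (fun x : ZMod b => -(T b x * C b (α * x)))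
              ((μ : ZMod b) + (((b + 1) / 2 : ℕ) : ZMod b)) := fun μ =>
        QA.odd_term a b μ hbodd haev
      rw [Finset.sum_congr rfl (fun μ _ => h1 μ),
        QA.sum_conv_range b
          (fun x => (fun x : ZMod b => -(T b x * C b (α * x))) (x + (((b + 1) / 2 : ℕ) : ZMod b))),
        QA.sum_add_const b (fun x : ZMod b => -(T b x * C b (α * x))), Finset.sum_neg_distrib, hU]
      ring
    have hfinal : ∑ ν ∈ Finset.Ico 1 (2 * b), g ν = 2 * T2 := by
      have hdbl := QA.sum_range_double b g
      rw [hrange, hIco, hg0, zero_add, heven, hodd, zero_add] at hdbl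
      exact hdbl
    rw [hfinal]
  -- assemble
  rw [Qpart, hd1, hd2, hd3]
  have h2b : ((2 * b : ℕ) : ℝ) = 2 * (b : ℝ) := by push_cast; ring
  rw [h2b]
  field_simp
  ring
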